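/- For all real numbers μ > ν ≥ 0, ∫₀^∞ max{(1/(ν+1))·e^{−t/(ν+1)} − (1/(μ+1))·e^{−t/(μ+1)}, 0} dt = ((μ−ν)/(μ+1)) · ((μ+1)/(ν+1))^{−(ν+1)/(μ−ν)}. -/

import Mathlib

open MeasureTheory

/-- For `μ > ν ≥ 0`,
`∫₀^∞ max{(1/(ν+1))·e^{−t/(ν+1)} − (1/(μ+1))·e^{−t/(μ+1)}, 0} dt
  = ((μ−ν)/(μ+1)) · ((μ+1)/(ν+1))^{−(ν+1)/(μ−ν)}`. -/
theorem stmt_6 (ν μ : ℝ) (hν : 0 ≤ ν) (hμν : ν < μ) :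
    ∫ t in Set.Ioi (0 : ℝ),
        max ((1 / (ν + 1)) * Real.exp (-t / (ν + 1)) - (1 / (μ + 1)) * Real.exp (-t / (μ + 1))) 0
      = ((μ - ν) / (μ + 1)) * ((μ + 1) / (ν + 1)) ^ (-(ν + 1) / (μ - ν)) := by
  set a : ℝ := ν + 1 with ha'
  set b : ℝ := μ + 1 with hb'
  have ha : (0:ℝ) < a := by simp [ha']; linarith
  have hb : (0:ℝ) < b := by simp [hb']; linarith
  have hab : a < b := by simp [ha', hb']; linarith
  have hba : (0:ℝ) < b - a := by linarith
  have hbar : (1:ℝ) < b / a := (one_lt_div ha).2 hab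
  have hbar0 : (0:ℝ) < b / a := by positivity
  have hL : 0 ≤ Real.log (b / a) := Real.log_nonneg hbar.le
  set T : ℝ := a * b / (b - a) * Real.log (b / a) with hT
  have hT0 : 0 ≤ T := by positivity
  set g : ℝ → ℝ := fun t => (1 / a) * Real.exp (-t / a) - (1 / b) * Real.exp (-t / b) with hg
  have keylt : ∀ t : ℝ, g t < 0 ↔ T < t := by
    intro t
    have h1 : (1 / a) * Real.exp (-t / a) = Real.exp (-t / a - Real.log a) := by
      rw [Real.exp_sub, Real.exp_log ha]; ring
    have h2 : (1 / b) * Real.exp (-t / b) = Real.exp (-t / b - Real.log b) := by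
      rw [Real.exp_sub, Real.exp_log hb]; ring
    have hdiff : t / a - t / b = t * (b - a) / (a * b) := by field_simp
    have hlog := Real.log_div hb.ne' ha.ne'
    rw [hg]; simp only
    rw [sub_neg, h1, h2, Real.exp_lt_exp, hT, div_mul_eq_mul_div, div_lt_iff₀ hba]
    constructor
    · intro h
      have h2' : Real.log b - Real.log a < t / a - t / b := by
        have e1 : -t / a = -(t / a) := neg_div a t
        have e2 : -t / b = -(t / b) := neg_div b t
        linarith
      rw [hdiff, lt_div_iff₀ (mul_pos ha hb)] at h2'
      rw [hlog, mul_comm]; exact h2'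
    · intro h
      rw [hlog, mul_comm] at h
      have h2' : Real.log b - Real.log a < t * (b - a) / (a * b) :=
        (lt_div_iff₀ (mul_pos ha hb)).2 h
      rw [← hdiff] at h2'
      have e1 : -t / a = -(t / a) := neg_div a t
      have e2 : -t / b = -(t / b) := neg_div b t
      linarith
  have hcong : Set.EqOn (fun t => max (g t) 0) ((Set.Ioc 0 T).indicator g) (Set.Ioi 0) := by
    intro t ht
    by_cases h : t ≤ T
    · have hge : 0 ≤ g t := by
        by_contra hneg
        push_neg at hneg
        exact absurd ((keylt t).1 hneg) (not_lt.2 h)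
      simp [Set.indicator_of_mem (Set.mem_Ioc.2 ⟨ht, h⟩), max_eq_left hge]
    · push_neg at h
      have hlt : g t < 0 := (keylt t).2 h
      simp [Set.indicator_of_notMem (fun hc => absurd (Set.mem_Ioc.1 hc).2 (not_le.2 h)),
        max_eq_right hlt.le]
  have hgcont : Continuous g := by
    rw [hg]; fun_prop
  have step1 : (∫ t in Set.Ioi (0:ℝ), max (g t) 0) = ∫ t in Set.Ioc 0 T, g t := by
    rw [setIntegral_congr_fun measurableSet_Ioi hcong,
      setIntegral_indicator measurableSet_Ioc]
    congr 1
    rw [Set.inter_eq_self_of_subset_right Set.Ioc_subset_Ioi_self]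
  have step2 : (∫ t in Set.Ioc 0 T, g t) = Real.exp (-T / b) - Real.exp (-T / a) := by
    rw [← intervalIntegral.integral_of_le hT0]
    have hder : ∀ t ∈ Set.uIcc (0:ℝ) T,
        HasDerivAt (fun t => Real.exp (-t / b) - Real.exp (-t / a)) (g t) t := by
      intro t _
      have d1 : HasDerivAt (fun t : ℝ => -t / a) (-(1 / a)) t := by
        simpa [neg_div] using ((hasDerivAt_id t).neg.div_const a)
      have d2 : HasDerivAt (fun t : ℝ => -t / b) (-(1 / b)) t := by
        simpa [neg_div] using ((hasDerivAt_id t).neg.div_const b)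
      have e1 := d1.exp
      have e2 := d2.exp
      have := e2.sub e1
      exact this.congr_deriv (by rw [hg]; ring)
    have hint : IntervalIntegrable g volume 0 T := hgcont.intervalIntegrable 0 T
    rw [intervalIntegral.integral_eq_sub_of_hasDerivAt hder hint]
    simp
  have hμν' : μ - ν = b - a := by rw [ha', hb']; ring
  have hexp1 : Real.exp (-T / a) = (b / a) ^ (-(b / (b - a))) := by
    rw [Real.rpow_def_of_pos hbar0]
    congr 1
    rw [hT]; field_simp
  have hexp2 : Real.exp (-T / b) = (b / a) ^ (-(a / (b - a))) := by
    rw [Real.rpow_def_of_pos hbar0]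
    congr 1
    rw [hT]; field_simp
  have hsplit : (b / a) ^ (-(b / (b - a))) = (b / a) ^ (-(a / (b - a))) * (a / b) := by
    have he : (-(b / (b - a)) : ℝ) = -(a / (b - a)) + (-1) := by field_simp; ring
    rw [he, Real.rpow_add hbar0, Real.rpow_neg_one, inv_div]
  calc ∫ t in Set.Ioi (0:ℝ), max (g t) 0
      = Real.exp (-T / b) - Real.exp (-T / a) := by rw [step1, step2]
    _ = (b / a) ^ (-(a / (b - a))) - (b / a) ^ (-(a / (b - a))) * (a / b) := by
        rw [hexp1, hexp2, hsplit]
    _ = ((μ - ν) / b) * (b / a) ^ (-a / (μ - ν)) := by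
        rw [hμν', neg_div]
        have hX : (0:ℝ) < (b / a) ^ (-(a / (b - a))) := Real.rpow_pos_of_pos hbar0 _
        field_simp
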